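/- Let k be a positive integer and let R be a finite set of positive integers. Then μ(D(kR)) = k · μ(D(R)), where kR = {k·r : r ∈ R}. -/

import Mathlib

open Finset

lemma fiber_card (N m : ℕ) (hN : 0 < N) (hm : m ∣ N) :
    ((range N).filter (fun a => N / Nat.gcd a N = m)).card = Nat.totient m := by
  obtain ⟨g, rfl⟩ := hm
  have hm0 : 0 < m := Nat.pos_of_ne_zero fun h => by simp [h] at hN
  have hg0 : 0 < g := Nat.pos_of_ne_zero fun h => by simp [h] at hN
  have hmg : m * g / g = m := by rw [Nat.mul_div_cancel _ hg0]
  rw [Nat.totient]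
  apply Finset.card_bij' (fun a _ => a / g) (fun b _ => g * b)
  · intro a ha
    simp only [mem_filter, mem_range] at ha ⊢
    obtain ⟨ha1, ha2⟩ := ha
    have hgcd : Nat.gcd a (m * g) = g := by
      have hd : Nat.gcd a (m * g) ∣ m * g := Nat.gcd_dvd_right _ _
      have h2 := Nat.div_mul_cancel hd
      rw [ha2] at h2
      exact Nat.eq_of_mul_eq_mul_left hm0 h2
    have hga : g ∣ a := hgcd ▸ Nat.gcd_dvd_left a (m * g)
    constructor
    · exact Nat.div_lt_of_lt_mul (by rwa [mul_comm] at ha1)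
    · have hco := Nat.coprime_div_gcd_div_gcd (m := a) (n := m * g)
        (by rw [hgcd]; exact hg0)
      rw [hgcd, hmg] at hco
      exact hco.symm
  · intro b hb
    simp only [mem_filter, mem_range] at hb ⊢
    obtain ⟨hb1, hb2⟩ := hb
    refine ⟨by rw [mul_comm m g]; exact mul_lt_mul_of_pos_left hb1 hg0, ?_⟩
    have hgcd : Nat.gcd (g * b) (m * g) = g := by
      rw [mul_comm m g, Nat.gcd_mul_left, (Nat.Coprime.symm hb2 : Nat.gcd b m = 1), mul_one]
    rw [hgcd, mul_comm m g, Nat.mul_div_cancel_left _ hg0]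
  · intro a ha
    simp only [mem_filter, mem_range] at ha
    obtain ⟨ha1, ha2⟩ := ha
    have hgcd : Nat.gcd a (m * g) = g := by
      have hd : Nat.gcd a (m * g) ∣ m * g := Nat.gcd_dvd_right _ _
      have h2 := Nat.div_mul_cancel hd
      rw [ha2] at h2
      exact Nat.eq_of_mul_eq_mul_left hm0 h2
    have hga : g ∣ a := hgcd ▸ Nat.gcd_dvd_left a (m * g)
    exact Nat.mul_div_cancel' hga
  · intro b hb
    exact Nat.mul_div_cancel_left _ hg0

lemma key (S : Finset ℕ) (N : ℕ) (hN : 0 < N) (hS : ∀ r ∈ S, r ∣ N)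
    (hS0 : ∀ r ∈ S, 0 < r) [DecidablePred fun a => ∃ r ∈ S, N ∣ a * r] :
    ∑ m ∈ S.biUnion Nat.divisors, Nat.totient m =
      ((range N).filter (fun a => ∃ r ∈ S, N ∣ a * r)).card := by
  classical
  have hequiv : ∀ a, (∃ r ∈ S, N ∣ a * r) ↔ (N / Nat.gcd a N) ∈ S.biUnion Nat.divisors := by
    intro a
    have key1 : ∀ r, N ∣ a * r ↔ N / Nat.gcd a N ∣ r := by
      intro r
      have hg0 : 0 < Nat.gcd a N := Nat.gcd_pos_of_pos_right a hN
      have hga : Nat.gcd a N ∣ a := Nat.gcd_dvd_left a N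
      have hgN : Nat.gcd a N ∣ N := Nat.gcd_dvd_right a N
      have hco : Nat.Coprime (a / Nat.gcd a N) (N / Nat.gcd a N) :=
        Nat.coprime_div_gcd_div_gcd hg0
      constructor
      · rintro ⟨c, hc⟩
        have h2 : N / Nat.gcd a N ∣ (a / Nat.gcd a N) * r := by
          refine ⟨c, Nat.eq_of_mul_eq_mul_left hg0 ?_⟩
          rw [← mul_assoc, ← mul_assoc, Nat.mul_div_cancel' hga, Nat.mul_div_cancel' hgN]
          exact hc
        exact (hco.symm).dvd_of_dvd_mul_left h2
      · rintro ⟨c, hc⟩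
        refine ⟨a / Nat.gcd a N * c, ?_⟩
        calc a * r = a * (N / Nat.gcd a N * c) := by rw [hc]
          _ = (Nat.gcd a N * (a / Nat.gcd a N)) * (N / Nat.gcd a N * c) := by
              rw [Nat.mul_div_cancel' hga]
          _ = (Nat.gcd a N * (N / Nat.gcd a N)) * (a / Nat.gcd a N * c) := by ring
          _ = N * (a / Nat.gcd a N * c) := by rw [Nat.mul_div_cancel' hgN]
    simp only [mem_biUnion, Nat.mem_divisors]
    constructor
    · rintro ⟨r, hr, hdvd⟩
      exact ⟨r, hr, (key1 r).mp hdvd, (hS0 r hr).ne'⟩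
    · rintro ⟨r, hr, hdvd, _⟩
      exact ⟨r, hr, (key1 r).mpr hdvd⟩
  have hfe : (range N).filter (fun a => ∃ r ∈ S, N ∣ a * r) =
      (range N).filter (fun a => (N / Nat.gcd a N) ∈ S.biUnion Nat.divisors) := by
    ext a; simp only [mem_filter, mem_range, hequiv]
  rw [hfe]
  rw [Finset.card_eq_sum_card_fiberwise
    (f := fun a => N / Nat.gcd a N) (t := S.biUnion Nat.divisors)
    (s := (range N).filter (fun a => (N / Nat.gcd a N) ∈ S.biUnion Nat.divisors))
    (fun x hx => (mem_filter.mp hx).2)]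
  apply Finset.sum_congr rfl
  intro m hm
  rw [Finset.filter_filter]
  have hmdvd : m ∣ N := by
    simp only [mem_biUnion, Nat.mem_divisors] at hm
    obtain ⟨r, hr, hdvd, _⟩ := hm
    exact hdvd.trans (hS r hr)
  rw [← fiber_card N m hN hmdvd]
  congr 1
  ext a
  simp only [mem_filter, mem_range, and_assoc]
  constructor
  · intro h
    exact ⟨h.1, by rw [h.2]; exact hm, h.2⟩
  · intro h
    exact ⟨h.1, h.2.2⟩

lemma periodic_count (N c : ℕ) (P : ℕ → Prop) [DecidablePred P]
    (hP : ∀ a, P (a + N) ↔ P a) :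
    ((range (c * N)).filter P).card = c * ((range N).filter P).card := by
  have hP' : ∀ j a, P (j * N + a) ↔ P a := by
    intro j
    induction j with
    | zero => simp
    | succ j ih =>
      intro a
      have h : (j + 1) * N + a = (j * N + a) + N := by ring
      rw [h, hP, ih]
  induction c with
  | zero => simp
  | succ c ih =>
    have h1 : (c + 1) * N = c * N + N := by ring
    rw [h1, Finset.range_add, Finset.filter_union, Finset.card_union_of_disjoint, ih]
    · have h2 : ((Finset.map (addLeftEmbedding (c * N)) (range N)).filter P).card
          = ((range N).filter P).card := by
        rw [Finset.filter_map, Finset.card_map]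
        congr 1
        ext a
        simp only [mem_filter, Function.comp_apply, addLeftEmbedding_apply, hP' c a]
      rw [h2]; ring
    · exact Finset.disjoint_filter_filter (Finset.disjoint_left.mpr (by
        intro a ha hb
        simp only [mem_range] at ha
        simp only [Finset.mem_map, mem_range, addLeftEmbedding_apply] at hb
        obtain ⟨b, _, rfl⟩ := hb
        omega))

theorem mu_D_smul (k : ℕ) (hk : 0 < k) (R : Finset ℕ) (hR : ∀ r ∈ R, 0 < r) :
    ∑ m ∈ (R.image (fun r => k * r)).biUnion Nat.divisors, Nat.totient m =
      k * ∑ m ∈ R.biUnion Nat.divisors, Nat.totient m := by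
  classical
  set N := ∏ r ∈ R, r with hN
  have hN0 : 0 < N := Finset.prod_pos hR
  have hdvd : ∀ r ∈ R, r ∣ N := fun r hr => Finset.dvd_prod_of_mem _ hr
  rw [key R N hN0 hdvd hR]
  rw [key (R.image (fun r => k * r)) (k * N) (by positivity)
    (by rintro s hs; simp only [mem_image] at hs; obtain ⟨r, hr, rfl⟩ := hs
        exact mul_dvd_mul_left k (hdvd r hr))
    (by rintro s hs; simp only [mem_image] at hs; obtain ⟨r, hr, rfl⟩ := hs
        exact Nat.mul_pos hk (hR r hr))]
  have hcond : ∀ a, (∃ s ∈ R.image (fun r => k * r), k * N ∣ a * s) ↔ (∃ r ∈ R, N ∣ a * r) := by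
    intro a
    constructor
    · rintro ⟨s, hs, hd⟩
      simp only [mem_image] at hs
      obtain ⟨r, hr, rfl⟩ := hs
      refine ⟨r, hr, ?_⟩
      have h3 : k * N ∣ k * (a * r) := by
        rw [show k * (a * r) = a * (k * r) by ring]; exact hd
      exact (mul_dvd_mul_iff_left hk.ne').mp h3
    · rintro ⟨r, hr, hd⟩
      refine ⟨k * r, Finset.mem_image_of_mem _ hr, ?_⟩
      rw [show a * (k * r) = k * (a * r) by ring]
      exact mul_dvd_mul_left k hd
  have hfe : (range (k * N)).filter (fun a => ∃ s ∈ R.image (fun r => k * r), k * N ∣ a * s) =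
      (range (k * N)).filter (fun a => ∃ r ∈ R, N ∣ a * r) := by
    ext a; simp only [mem_filter, mem_range, hcond]
  rw [hfe]
  exact periodic_count N k (fun a => ∃ r ∈ R, N ∣ a * r)
    (fun a => by
      constructor
      · rintro ⟨r, hr, hd⟩
        refine ⟨r, hr, ?_⟩
        have h : (a + N) * r = a * r + N * r := by ring
        rw [h, add_comm] at hd
        exact (Nat.dvd_add_right (Dvd.intro r rfl)).mp hd
      · rintro ⟨r, hr, hd⟩
        refine ⟨r, hr, ?_⟩
        have h : (a + N) * r = a * r + N * r := by ring
        rw [h]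
        exact Nat.dvd_add hd (Dvd.intro r rfl))
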